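/- Let A ∈ ℝ^{m×n} have nonzero columns a_1,…,a_n. Then the set of feasible matrices for A is nonempty, and the infimum defining the generalized mutual coherence μ(A) is attained: there exists W ∈ ℝ^{n×m} with W_iᵀ a_i = 1 for all i and max_{i≠j} |W_iᵀ a_j| = μ(A). In other words, the set W(A) of minimizers is nonempty. -/

import Mathlib

/-- `W ∈ ℝ^{n×m}` is feasible for `A ∈ ℝ^{m×n}` if each row `W_i` satisfies
`W_iᵀ a_i = 1`, where `a_i` is the `i`-th column of `A`. -/
def FeasibleFor {m n : ℕ} (A : Matrix (Fin m) (Fin n) ℝ)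
    (W : Matrix (Fin n) (Fin m) ℝ) : Prop :=
  ∀ i : Fin n, ∑ k, W i k * A k i = 1

/-- The coherence-type objective `max_{i ≠ j} |W_iᵀ a_j|` associated with a pair `(A, W)`. -/
noncomputable def cohObj {m n : ℕ} (A : Matrix (Fin m) (Fin n) ℝ)
    (W : Matrix (Fin n) (Fin m) ℝ) : ℝ :=
  ⨆ p : {p : Fin n × Fin n // p.1 ≠ p.2}, |∑ k, W p.1.1 k * A k p.1.2|

/-- If `A` has nonzero columns, then the set of feasible matrices is nonempty and the
infimum defining the generalized mutual coherence `μ(A)` is attained: there exists a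
feasible `W` with `max_{i≠j} |W_iᵀ a_j| = μ(A)`; i.e. `𝒲(A) ≠ ∅`. -/
theorem generalized_mutual_coherence_attained {m n : ℕ}
    (A : Matrix (Fin m) (Fin n) ℝ)
    (hA : ∀ j : Fin n, (fun i => A i j) ≠ (0 : Fin m → ℝ)) :
    (∃ W : Matrix (Fin n) (Fin m) ℝ, FeasibleFor A W) ∧
    (∃ W : Matrix (Fin n) (Fin m) ℝ, FeasibleFor A W ∧
      cohObj A W = sInf {c : ℝ | ∃ W' : Matrix (Fin n) (Fin m) ℝ,
        FeasibleFor A W' ∧ cohObj A W' = c}) := by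
  classical
  -- an initial feasible matrix
  have hW0 : ∃ W : Matrix (Fin n) (Fin m) ℝ, FeasibleFor A W := by
    refine ⟨fun i k => A k i / (∑ l, A l i ^ 2), fun i => ?_⟩
    have hs : 0 < ∑ l, A l i ^ 2 := by
      obtain ⟨k, hk⟩ : ∃ k, A k i ≠ 0 := by
        by_contra h; push_neg at h; exact hA i (funext h)
      exact Finset.sum_pos' (fun l _ => sq_nonneg _)
        ⟨k, Finset.mem_univ _, by positivity⟩
    have : ∑ k, A k i / (∑ l, A l i ^ 2) * A k i = (∑ k, A k i ^ 2) / (∑ l, A l i ^ 2) := by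
      rw [Finset.sum_div]
      exact Finset.sum_congr rfl fun k _ => by ring
    rw [this, div_self hs.ne']
  obtain ⟨W₀, hW₀⟩ := hW0
  set ι := {p : Fin n × Fin n // p.1 ≠ p.2} with hι
  rcases isEmpty_or_nonempty ι with hE | hNE
  · -- degenerate case: no off-diagonal pairs, objective is identically 0
    have hzero : ∀ W : Matrix (Fin n) (Fin m) ℝ, cohObj A W = 0 := fun W => by
      rw [cohObj, iSup_of_empty', Real.sSup_empty]
    have hT : {c : ℝ | ∃ W' : Matrix (Fin n) (Fin m) ℝ,
        FeasibleFor A W' ∧ cohObj A W' = c} = {0} := by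
      ext c
      constructor
      · rintro ⟨W', _, rfl⟩; exact hzero W'
      · rintro rfl; exact ⟨W₀, hW₀, hzero W₀⟩
    exact ⟨⟨W₀, hW₀⟩, ⟨W₀, hW₀, by rw [hT, csInf_singleton, hzero]⟩⟩
  · -- main case
    set g : Matrix (Fin n) (Fin n) ℝ → ℝ := fun M => ⨆ p : ι, |M p.1.1 p.1.2| with hg
    have hg_eq : ∀ W : Matrix (Fin n) (Fin m) ℝ, cohObj A W = g (W * A) := by
      intro W
      simp only [cohObj, hg, Matrix.mul_apply]
      rfl
    have hgcont : Continuous g := by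
      have : g = fun M => Finset.univ.sup' Finset.univ_nonempty
          (fun p : ι => |M p.1.1 p.1.2|) := by
        funext M
        rw [Finset.sup'_univ_eq_ciSup]
      rw [this]
      exact Continuous.finset_sup'_apply Finset.univ_nonempty
        fun p _ => (continuous_id.matrix_elem p.1.1 p.1.2).abs
    have hgbdd : ∀ (M : Matrix (Fin n) (Fin n) ℝ) (i j : Fin n), i ≠ j →
        |M i j| ≤ g M := fun M i j hij =>
      le_ciSup (f := fun p : ι => |M p.1.1 p.1.2|) (Finite.bddAbove_range _)
        (⟨(i, j), hij⟩ : ι)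
    -- the linear map W ↦ W * A
    set f : Matrix (Fin n) (Fin m) ℝ →ₗ[ℝ] Matrix (Fin n) (Fin n) ℝ :=
      { toFun := fun W => W * A
        map_add' := fun X Y => Matrix.add_mul X Y A
        map_smul' := fun c X => Matrix.smul_mul c X A } with hf
    set M₀ := W₀ * A with hM₀
    set C₀ := g M₀ with hC₀
    set R := max 1 C₀ with hR
    -- the compact constraint set in Gram space
    set K : Set (Matrix (Fin n) (Fin n) ℝ) :=
      {M | M ∈ LinearMap.range f ∧ (∀ i, M i i = 1) ∧ g M ≤ C₀} with hK
    have hM₀K : M₀ ∈ K := by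
      refine ⟨⟨W₀, rfl⟩, fun i => ?_, le_refl _⟩
      rw [hM₀, Matrix.mul_apply]
      exact hW₀ i
    have hKclosed : IsClosed K := by
      have h1 : IsClosed {M : Matrix (Fin n) (Fin n) ℝ | M ∈ LinearMap.range f} :=
        (LinearMap.range f).closed_of_finiteDimensional
      have h2 : IsClosed {M : Matrix (Fin n) (Fin n) ℝ | ∀ i, M i i = 1} := by
        have he : {M : Matrix (Fin n) (Fin n) ℝ | ∀ i, M i i = 1}
            = ⋂ i, {M : Matrix (Fin n) (Fin n) ℝ | M i i = 1} := by
          ext M; simp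
        rw [he]
        exact isClosed_iInter fun i =>
          isClosed_eq (continuous_id.matrix_elem i i) continuous_const
      have h3 : IsClosed {M : Matrix (Fin n) (Fin n) ℝ | g M ≤ C₀} :=
        isClosed_le hgcont continuous_const
      have he : K = {M : Matrix (Fin n) (Fin n) ℝ | M ∈ LinearMap.range f}
          ∩ ({M : Matrix (Fin n) (Fin n) ℝ | ∀ i, M i i = 1}
            ∩ {M : Matrix (Fin n) (Fin n) ℝ | g M ≤ C₀}) := rfl
      rw [he]
      exact h1.inter (h2.inter h3)
    -- the box containing K
    set B : Set (Matrix (Fin n) (Fin n) ℝ) :=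
      Set.univ.pi (fun _ : Fin n => Set.univ.pi fun _ : Fin n => Set.Icc (-R) R) with hB
    have hBcompact : IsCompact B :=
      isCompact_univ_pi fun _ => isCompact_univ_pi fun _ => isCompact_Icc
    have hKB : K ⊆ B := by
      rintro M ⟨-, hdiag, hle⟩
      rw [hB]
      refine Set.mem_univ_pi.mpr ?_
      intro i
      rw [Set.mem_univ_pi]
      intro j
      rw [Set.mem_Icc, ← abs_le]
      rcases eq_or_ne i j with rfl | hij
      · rw [hdiag i, abs_one]; exact le_max_left _ _
      · exact (hgbdd M i j hij).trans (hle.trans (le_max_right _ _))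
    have hKcompact : IsCompact K := hBcompact.of_isClosed_subset hKclosed hKB
    obtain ⟨Mstar, hMstarK, hmin⟩ :=
      hKcompact.exists_isMinOn ⟨M₀, hM₀K⟩ hgcont.continuousOn
    obtain ⟨⟨W₁, hW₁⟩, hdiag, hle⟩ := hMstarK
    have hW₁A : W₁ * A = Mstar := hW₁
    have hW₁feas : FeasibleFor A W₁ := by
      intro i
      have := hdiag i
      rw [← hW₁A, Matrix.mul_apply] at this
      exact this
    have hlow : ∀ W' : Matrix (Fin n) (Fin m) ℝ, FeasibleFor A W' →
        cohObj A W₁ ≤ cohObj A W' := by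
      intro W' hW'
      rw [hg_eq, hg_eq, hW₁A]
      rcases le_or_gt (g (W' * A)) C₀ with h | h
      · exact hmin ⟨⟨W', rfl⟩, fun i => by rw [Matrix.mul_apply]; exact hW' i, h⟩
      · exact le_trans (hmin hM₀K) h.le
    refine ⟨⟨W₀, hW₀⟩, ⟨W₁, hW₁feas, ?_⟩⟩
    have hmem : cohObj A W₁ ∈ {c : ℝ | ∃ W' : Matrix (Fin n) (Fin m) ℝ,
        FeasibleFor A W' ∧ cohObj A W' = c} := ⟨W₁, hW₁feas, rfl⟩
    refine le_antisymm ?_ ?_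
    · exact le_csInf ⟨_, hmem⟩ fun c ⟨W', h1, h2⟩ => h2 ▸ hlow W' h1
    · exact csInf_le ⟨cohObj A W₁, fun c ⟨W', h1, h2⟩ => h2 ▸ hlow W' h1⟩ hmem
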